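/- Let n ≥ 1 and let K be an n-dimensional grid (product of n nontrivial finite chains) with canonical chains C₁,…,Cₙ. If L is a sublattice of K that is itself isomorphic to an n-dimensional grid, then there exist nontrivial subchains E₁ ⊆ C₁, …, Eₙ ⊆ Cₙ such that L = { x ∈ K : x ∧ 1_{C₁} ∈ E₁, …, x ∧ 1_{Cₙ} ∈ Eₙ }. -/

import Mathlib

/-- If `L` is a sublattice of an `n`-dimensional grid `K = Π i, C i`
and `L` is itself isomorphic to an `n`-dimensional grid, then there are nontrivial
subchains `E i` of the canonical chains `Set.Iic (e i)` of `K` such that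
`L = {x : ∀ i, x ⊓ e i ∈ E i}`, where `e i = Function.update ⊥ i ⊤`. -/
theorem statement3 (n : ℕ) (hn : 1 ≤ n) (C : Fin n → Type)
    [∀ i, LinearOrder (C i)] [∀ i, Fintype (C i)] [∀ i, Nontrivial (C i)]
    [∀ i, BoundedOrder (C i)]
    (L : Sublattice (∀ i, C i))
    (hL : ∃ k : Fin n → ℕ, Nonempty (L ≃o (∀ i, Fin (k i + 2)))) :
    ∃ E : Fin n → Set (∀ i, C i),
      (∀ i, E i ⊆ Set.Iic (Function.update (⊥ : ∀ j, C j) i ⊤)) ∧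
      (∀ i, ∃ a b, a ∈ E i ∧ b ∈ E i ∧ a ≠ b) ∧
      (L : Set (∀ i, C i)) =
        {x | ∀ i, x ⊓ Function.update (⊥ : ∀ j, C j) i ⊤ ∈ E i} := by
  classical
  obtain ⟨k, ⟨φ⟩⟩ := hL
  have hne : (Finset.univ : Finset (Fin n)).Nonempty := ⟨⟨0, hn⟩, Finset.mem_univ _⟩
  -- the embedding of the grid into the ambient lattice
  set G := (∀ j : Fin n, Fin (k j + 2)) with hGdef
  let ψ : G → (∀ i, C i) := fun g => (φ.symm g : ∀ i, C i)
  have hψ_inj : Function.Injective ψ := fun a b h =>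
    φ.symm.injective (Subtype.coe_injective h)
  have hψ_mem : ∀ g, ψ g ∈ L := fun g => (φ.symm g).2
  have hψ_surj : ∀ x ∈ L, ∃ g, ψ g = x := fun x hx =>
    ⟨φ ⟨x, hx⟩, by simp [ψ]⟩
  have hψ_sup : ∀ a b : G, ψ (a ⊔ b) = ψ a ⊔ ψ b := by
    intro a b
    show ((φ.symm (a ⊔ b) : L) : ∀ i, C i) = _
    rw [map_sup]; rfl
  have hψ_inf : ∀ a b : G, ψ (a ⊓ b) = ψ a ⊓ ψ b := by
    intro a b
    show ((φ.symm (a ⊓ b) : L) : ∀ i, C i) = _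
    rw [map_inf]; rfl
  have hψ_mono : Monotone ψ := by
    intro a b hab
    have := sup_eq_right.mpr hab
    calc ψ a ≤ ψ a ⊔ ψ b := le_sup_left
    _ = ψ (a ⊔ b) := (hψ_sup a b).symm
    _ = ψ b := by rw [this]
  -- Key: each coordinate of ψ depends on a single coordinate of the grid
  have key : ∀ i : Fin n, ∃ (j : Fin n) (f : Fin (k j + 2) → C i),
      ∀ g : G, ψ g i = f (g j) := by
    intro i
    have hbotapp : ∀ j0 : Fin n, (⊥ : G) j0 = ⊥ := fun _ => rfl
    set b : C i := ψ ⊥ i with hb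
    set F : ∀ j : Fin n, Fin (k j + 2) → C i :=
      fun j c => ψ (Function.update ⊥ j c) i with hF
    have hF0 : ∀ j, F j ⊥ = b := by
      intro j
      have h : Function.update (⊥ : G) j ⊥ = ⊥ := by
        funext j0
        rcases eq_or_ne j0 j with rfl | hj0
        · simp [hbotapp]
        · simp [Function.update_of_ne hj0, hbotapp]
      simp only [F, h]; rfl
    have hFmono : ∀ j, Monotone (F j) := by
      intro j a a' haa'
      apply hψ_mono
      intro j0
      rcases eq_or_ne j0 j with rfl | hj0
      · simpa using haa'
      · simp [Function.update_of_ne hj0]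
    have hble : ∀ j a, b ≤ F j a := by
      intro j a
      rw [← hF0 j]
      exact hFmono j bot_le
    -- decomposition of g as a sup
    have hdecomp : ∀ g : G,
        Finset.univ.sup' hne (fun j => Function.update (⊥ : G) j (g j)) = g := by
      intro g
      apply le_antisymm
      · apply Finset.sup'_le
        intro j _ j0
        rcases eq_or_ne j0 j with rfl | hj0
        · simp
        · simp [Function.update_of_ne hj0, hbotapp]
      · intro j0
        have h1 : Function.update (⊥ : G) j0 (g j0) ≤
            Finset.univ.sup' hne (fun j => Function.update (⊥ : G) j (g j)) :=
          Finset.le_sup' (fun j => Function.update (⊥ : G) j (g j)) (Finset.mem_univ j0)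
        have h2 := h1 j0
        rwa [Function.update_self] at h2
    -- ψ applied to a sup'
    have hsup : ∀ g : G, ψ g i = Finset.univ.sup' hne (fun j => F j (g j)) := by
      intro g
      let Ψ : SupHom G (C i) := ⟨fun x => ψ x i, fun a a' => by
        show ψ (a ⊔ a') i = ψ a i ⊔ ψ a' i
        rw [hψ_sup]; rfl⟩
      calc ψ g i = Ψ (Finset.univ.sup' hne (fun j => Function.update (⊥ : G) j (g j))) := by
              rw [hdecomp g]; rfl
        _ = Finset.univ.sup' hne (fun j => Ψ (Function.update (⊥ : G) j (g j))) :=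
              map_finset_sup' Ψ hne _
        _ = Finset.univ.sup' hne (fun j => F j (g j)) := rfl
    -- pairwise meets are b
    have hmeet : ∀ j j', j ≠ j' → ∀ a a', F j a ⊓ F j' a' = b := by
      intro j j' hjj' a a'
      have hbot : Function.update (⊥ : G) j a ⊓ Function.update (⊥ : G) j' a' = ⊥ := by
        funext j0
        rcases eq_or_ne j0 j with rfl | h1
        · have h2 : j0 ≠ j' := hjj'
          simp [Function.update_of_ne h2, hbotapp]
        · rcases eq_or_ne j0 j' with rfl | h2
          · simp [Function.update_of_ne h1, hbotapp]
          · simp [Function.update_of_ne h1, Function.update_of_ne h2, hbotapp]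
      have := congrFun (hψ_inf (Function.update (⊥ : G) j a) (Function.update (⊥ : G) j' a')) i
      rw [Pi.inf_apply] at this
      calc F j a ⊓ F j' a' = ψ (Function.update (⊥ : G) j a ⊓ Function.update (⊥ : G) j' a') i :=
            this.symm
        _ = b := by rw [hbot]
    by_cases hcon : ∀ j a, F j a = b
    · refine ⟨i, fun _ => b, fun g => ?_⟩
      rw [hsup g]
      have : (fun j => F j (g j)) = fun _ => b := funext fun j => hcon j (g j)
      rw [this, Finset.sup'_const]
    · push_neg at hcon
      obtain ⟨j, a, hja⟩ := hcon
      have hothers : ∀ j', j' ≠ j → ∀ a', F j' a' = b := by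
        intro j' hj' a'
        by_contra hcontra
        have h1 : b < F j a := lt_of_le_of_ne (hble j a) (Ne.symm hja)
        have h2 : b < F j' a' := lt_of_le_of_ne (hble j' a') (Ne.symm hcontra)
        have := hmeet j j' (Ne.symm hj') a a'
        have hlt : b < F j a ⊓ F j' a' := lt_inf_iff.mpr ⟨h1, h2⟩
        rw [this] at hlt
        exact lt_irrefl b hlt
      refine ⟨j, F j, fun g => ?_⟩
      rw [hsup g]
      apply le_antisymm
      · apply Finset.sup'_le
        intro j' _
        rcases eq_or_ne j' j with rfl | hj'
        · exact le_rfl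
        · rw [hothers j' hj']
          exact hble j (g j)
      · exact Finset.le_sup' (fun j' => F j' (g j')) (Finset.mem_univ j)
  choose σ f hf using key
  -- σ is surjective
  have hσsurj : Function.Surjective σ := by
    by_contra h
    unfold Function.Surjective at h
    push_neg at h
    obtain ⟨j, hj⟩ := h
    have heq : ψ ⊥ = ψ (Function.update (⊥ : G) j 1) := by
      funext i
      rw [hf, hf, Function.update_of_ne (hj i)]
    have := congrFun (hψ_inj heq) j
    rw [Function.update_self] at this
    have hbz : (⊥ : Fin (k j + 2)) = 0 := rfl
    rw [Pi.bot_apply, hbz] at this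
    exact zero_ne_one this
  have hσinj : Function.Injective σ := Finite.injective_iff_surjective.mpr hσsurj
  -- each f i is injective
  have hfinj : ∀ i, Function.Injective (f i) := by
    intro i a a' haa'
    have heq : ψ (Function.update (⊥ : G) (σ i) a) = ψ (Function.update (⊥ : G) (σ i) a') := by
      funext i'
      rw [hf, hf]
      rcases eq_or_ne i' i with rfl | hne'
      · rw [Function.update_self, Function.update_self, haa']
      · rw [Function.update_of_ne (fun hc => hne' (hσinj hc)),
          Function.update_of_ne (fun hc => hne' (hσinj hc))]
    have := congrFun (hψ_inj heq) (σ i)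
    rwa [Function.update_self, Function.update_self] at this
  refine ⟨fun i => (fun c => Function.update (⊥ : ∀ j, C j) i c) '' Set.range (f i),
    ?_, ?_, ?_⟩
  · -- E i ⊆ Iic (e i)
    rintro i x ⟨c, -, rfl⟩
    rw [Set.mem_Iic]
    show Function.update (⊥ : ∀ j, C j) i c ≤ _
    intro j
    rcases eq_or_ne j i with rfl | hne'
    · simp
    · simp [Function.update_of_ne hne']
  · -- nontriviality
    intro i
    refine ⟨Function.update (⊥ : ∀ j, C j) i (f i 0), Function.update (⊥ : ∀ j, C j) i (f i 1),
      ⟨f i 0, Set.mem_range_self _, rfl⟩, ⟨f i 1, Set.mem_range_self _, rfl⟩, ?_⟩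
    intro hcontra
    have h1 := congrFun hcontra i
    rw [Function.update_self, Function.update_self] at h1
    have h2 := hfinj i h1
    exact zero_ne_one h2
  · -- the set equality
    have hxinf : ∀ (x : ∀ j, C j) (i : Fin n),
        x ⊓ Function.update (⊥ : ∀ j, C j) i ⊤ = Function.update (⊥ : ∀ j, C j) i (x i) := by
      intro x i
      funext j
      rcases eq_or_ne j i with rfl | hne'
      · simp
      · simp [Function.update_of_ne hne']
    ext x
    simp only [SetLike.mem_coe, Set.mem_setOf_eq, hxinf]
    constructor
    · intro hx i
      obtain ⟨g, rfl⟩ := hψ_surj x hx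
      exact ⟨ψ g i, ⟨g (σ i), (hf i g).symm⟩, rfl⟩
    · intro hx
      have hC : ∀ i, ∃ c, f i c = x i := by
        intro i
        obtain ⟨d0, ⟨d, hd⟩, hc2⟩ := hx i
        refine ⟨d, ?_⟩
        have h := congrFun hc2 i
        simp only [Function.update_self] at h
        rw [hd]; exact h
      choose c hc using hC
      have hbij : Function.Bijective σ := ⟨hσinj, hσsurj⟩
      let eσ : Fin n ≃ Fin n := Equiv.ofBijective σ hbij
      have happ : ∀ j, σ (eσ.symm j) = j := fun j => eσ.apply_symm_apply j
      have hkey : ∀ j, k (σ (eσ.symm j)) + 2 = k j + 2 := fun j => by rw [happ j]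
      let g : G := fun j => Fin.cast (hkey j) (c (eσ.symm j))
      have hg : ∀ i, g (σ i) = c i := by
        intro i
        have h1 : eσ.symm (σ i) = i := eσ.symm_apply_apply i
        apply Fin.ext
        show (Fin.cast (hkey (σ i)) (c (eσ.symm (σ i)))).val = (c i).val
        rw [Fin.coe_cast]
        exact congrArg (fun t => (c t).val) h1
      have hgx : ψ g = x := funext fun i => by rw [hf, hg, hc]
      rw [← hgx]
      exact hψ_mem g
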